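/- The solution set {x ∈ ℕ^r : A x = b} of a system of linear Diophantine equations (A ∈ ℤ^{s×r}, b ∈ ℤ^s) is hyperlinear: it equals A_0 + U*, where A_0 is the (finite) set of minimal solutions of A x = b and U is the (finite) set of minimal non-zero solutions of A x = 0. -/

import Mathlib

/-- `P*`: all finite `ℕ`-linear combinations of elements of `P`. -/
def nstar {m : ℕ} (P : Set (Fin m → ℕ)) : Set (Fin m → ℕ) :=
  (AddSubmonoid.closure P : Set (Fin m → ℕ))

/-- Support of a vector. -/
def supp {m : ℕ} (v : Fin m → ℕ) : Set (Fin m) := {i | v i ≠ 0}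

/-- `U_J = {p ∈ U : supp p ⊆ J}`. -/
def restrictTo {m : ℕ} (U : Set (Fin m → ℕ)) (J : Set (Fin m)) : Set (Fin m → ℕ) :=
  {p ∈ U | supp p ⊆ J}

/-- A coordinate `j` is strongly unbounded for `A + U*` and `B + V*` if there are
`p ∈ U*`, `q ∈ V*` with `j ∈ supp p = supp q`. -/
def StronglyUnbounded {m : ℕ} (U V : Set (Fin m → ℕ)) (j : Fin m) : Prop :=
  ∃ p ∈ nstar U, ∃ q ∈ nstar V, j ∈ supp p ∧ supp p = supp q

/-- Coercion of a vector of naturals to a vector of integers. -/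
def toInt {m : ℕ} (v : Fin m → ℕ) : Fin m → ℤ := fun i => (v i : ℤ)

/-- `U ⊆ ℕ` is ultimately periodic. -/
def UltPeriodic (U : Set ℕ) : Prop :=
  ∃ n0 p : ℕ, 1 ≤ p ∧ ∀ n ≥ n0, (n ∈ U ↔ n + p ∈ U)

/-- A subset of `ℕ^m` is recognizable if it is a finite union of products
of ultimately periodic subsets of `ℕ`. -/
def Recognizable {m : ℕ} (S : Set (Fin m → ℕ)) : Prop :=
  ∃ (n : ℕ) (U : Fin n → Fin m → Set ℕ),
    (∀ j i, UltPeriodic (U j i)) ∧ S = ⋃ j, {v | ∀ i, v i ∈ U j i}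

section Aux

variable {r : ℕ}

lemma cast_sub_vec {u h : Fin r → ℕ} (hle : u ≤ h) :
    (fun i => (((h - u) i : ℕ) : ℤ)) = (fun i => (h i : ℤ)) - (fun i => (u i : ℤ)) := by
  funext i
  simp [Pi.sub_apply, Nat.cast_sub (hle i)]

lemma antichain_finite {S : Set (Fin r → ℕ)} (h : IsAntichain (· ≤ ·) S) : S.Finite :=
  h.finite_of_partiallyWellOrderedOn
    (Set.partiallyWellOrderedOn_of_wellQuasiOrdered wellQuasiOrdered_le S)

lemma hom_decomp {s : ℕ} (A : Matrix (Fin s) (Fin r) ℤ)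
    (Hom : Set (Fin r → ℕ)) (hHom : Hom = {x | A.mulVec (fun i => (x i : ℤ)) = 0})
    (U : Set (Fin r → ℕ))
    (hU : U = {x ∈ Hom | x ≠ 0 ∧ ∀ y ∈ Hom, y ≠ 0 → y ≤ x → y = x}) :
    ∀ n (h : Fin r → ℕ), h ∈ Hom → (∑ i, h i) = n → h ∈ nstar U := by
  intro n
  induction n using Nat.strong_induction_on with
  | _ n ih =>
    intro h hh hsum
    by_cases h0 : h = 0
    · subst h0; exact AddSubmonoid.zero_mem _
    · -- pick minimal nonzero element ≤ h in Hom
      set T : Set (Fin r → ℕ) := {y ∈ Hom | y ≠ 0 ∧ y ≤ h} with hT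
      have hTne : T.Nonempty := ⟨h, hh, h0, le_refl h⟩
      obtain ⟨u, huT, humin⟩ := wellFounded_lt.has_min T hTne
      obtain ⟨huHom, hune, hule⟩ := huT
      have huU : u ∈ U := by
        rw [hU]
        refine ⟨huHom, hune, fun y hy hyne hyle => ?_⟩
        have hyT : y ∈ T := ⟨hy, hyne, le_trans hyle hule⟩
        exact hyle.lt_or_eq.resolve_left (humin y hyT)
      have hsub : h - u ∈ Hom := by
        rw [hHom]
        have : (fun i => (((h - u) i : ℕ) : ℤ)) = (fun i => (h i : ℤ)) - (fun i => (u i : ℤ)) :=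
          cast_sub_vec hule
        simp only [Set.mem_setOf_eq, this, Matrix.mulVec_sub]
        rw [hHom] at hh huHom
        simp only [Set.mem_setOf_eq] at hh huHom
        rw [hh, huHom, sub_zero]
      have hlt : (∑ i, (h - u) i) < n := by
        rw [← hsum]
        have hne' : ∃ i, u i ≠ 0 := by
          by_contra hc
          push_neg at hc
          exact hune (funext fun i => hc i)
        obtain ⟨i0, hi0⟩ := hne'
        have : ∀ i, (h - u) i ≤ h i := fun i => Nat.sub_le _ _
        have hstrict : (h - u) i0 < h i0 := by
          have h1 : u i0 ≤ h i0 := hule i0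
          change h i0 - u i0 < h i0
          omega
        exact Finset.sum_lt_sum (fun i _ => this i) ⟨i0, Finset.mem_univ _, hstrict⟩
      have hrec : h - u ∈ nstar U := ih _ hlt (h - u) hsub rfl
      have heq : h = (h - u) + u := by
        funext i
        have h1 : u i ≤ h i := hule i
        change h i = (h i - u i) + u i
        omega
      rw [heq]
      exact AddSubmonoid.add_mem _ hrec (AddSubmonoid.subset_closure huU)

end Aux

theorem diophantine_solution_set_hyperlinear (s r : ℕ)
    (A : Matrix (Fin s) (Fin r) ℤ) (b : Fin s → ℤ)
    (Sol : Set (Fin r → ℕ)) (hSol : Sol = {x | A.mulVec (fun i => (x i : ℤ)) = b})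
    (Hom : Set (Fin r → ℕ)) (hHom : Hom = {x | A.mulVec (fun i => (x i : ℤ)) = 0})
    (A0 : Set (Fin r → ℕ)) (hA0 : A0 = {x ∈ Sol | ∀ y ∈ Sol, y ≤ x → y = x})
    (U : Set (Fin r → ℕ))
    (hU : U = {x ∈ Hom | x ≠ 0 ∧ ∀ y ∈ Hom, y ≠ 0 → y ≤ x → y = x}) :
    A0.Finite ∧ U.Finite ∧ Sol = Set.image2 (· + ·) A0 (nstar U) := by
  have cast_add : ∀ (x y : Fin r → ℕ),
      (fun i => (((x + y) i : ℕ) : ℤ)) = (fun i => (x i : ℤ)) + (fun i => (y i : ℤ)) := by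
    intro x y; funext i; simp
  -- nstar U ⊆ Hom
  have hnstar : nstar U ⊆ Hom := by
    have : AddSubmonoid.closure U ≤
        { carrier := Hom
          add_mem' := by
            intro a c ha hc
            rw [hHom] at ha hc ⊢
            simp only [Set.mem_setOf_eq] at *
            rw [cast_add, Matrix.mulVec_add, ha, hc, add_zero]
          zero_mem' := by
            show (0 : Fin r → ℕ) ∈ Hom
            rw [hHom]
            show A.mulVec (fun i => (((0 : Fin r → ℕ) i : ℕ) : ℤ)) = 0
            have h0 : (fun i => (((0 : Fin r → ℕ) i : ℕ) : ℤ)) = 0 := by funext i; simp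
            rw [h0, Matrix.mulVec_zero] } := by
      apply AddSubmonoid.closure_le.mpr
      intro x hx
      rw [hU] at hx
      exact hx.1
    exact this
  refine ⟨?_, ?_, ?_⟩
  · apply antichain_finite
    intro x hx y hy hne hle
    rw [hA0] at hx hy
    exact hne (hy.2 x hx.1 hle)
  · apply antichain_finite
    intro x hx y hy hne hle
    rw [hU] at hx hy
    exact hne (hy.2.2 x hx.1 hx.2.1 hle)
  · ext x
    constructor
    · intro hx
      -- pick a minimal solution a ≤ x
      set T : Set (Fin r → ℕ) := {y ∈ Sol | y ≤ x} with hT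
      have hTne : T.Nonempty := ⟨x, hx, le_refl x⟩
      obtain ⟨a, ⟨haSol, hax⟩, hamin⟩ := wellFounded_lt.has_min T hTne
      have haA0 : a ∈ A0 := by
        rw [hA0]
        refine ⟨haSol, fun y hy hya => ?_⟩
        have hyT : y ∈ T := ⟨hy, le_trans hya hax⟩
        exact hya.lt_or_eq.resolve_left (hamin y hyT)
      have hdiff : x - a ∈ Hom := by
        rw [hHom]
        simp only [Set.mem_setOf_eq]
        rw [show (fun i => (((x - a) i : ℕ) : ℤ)) = (fun i => (x i : ℤ)) - (fun i => (a i : ℤ))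
          from cast_sub_vec hax, Matrix.mulVec_sub]
        rw [hSol] at hx haSol
        simp only [Set.mem_setOf_eq] at hx haSol
        rw [hx, haSol, sub_self]
      have hstar : x - a ∈ nstar U := hom_decomp A Hom hHom U hU _ (x - a) hdiff rfl
      refine ⟨a, haA0, x - a, hstar, ?_⟩
      funext i
      have h1 : a i ≤ x i := hax i
      change a i + (x i - a i) = x i
      omega
    · rintro ⟨a, ha, u, hu, rfl⟩
      rw [hA0] at ha
      have haSol := ha.1
      have huHom := hnstar hu
      rw [hSol] at haSol ⊢
      rw [hHom] at huHom
      simp only [Set.mem_setOf_eq] at *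
      rw [cast_add, Matrix.mulVec_add, haSol, huHom, add_zero]
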